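/- Let f : ℝⁿ → ℝⁿ be C³ with f(x*) = 0 and f'(x*) nonsingular. Then there exist ρ > 0 and a constant C₁ depending only on f such that for all x_k, x_{k−1} ∈ B_ρ(x*) with x_{k−1} ≠ x*, the ratio of consecutive Newton update norms satisfies η_{k+1} = ‖w_{k+1}‖/‖w_k‖ ≤ C₁·‖e_k‖/‖e_{k−1}‖, where w_{j+1} = −f'(x_j)⁻¹ f(x_j) and e_j = x_j − x*. -/

import Mathlib

open Asymptotics Filter

set_option maxHeartbeats 1000000 in
/-- Let `f : ℝⁿ → ℝⁿ` be `C³` with `f x* = 0` and `f'(x*)` nonsingular.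
There exist `ρ > 0` and a constant `C₁` depending only on `f` such that for all
`x_k, x_{k-1} ∈ B_ρ(x*)` with `x_{k-1} ≠ x*`, the Newton updates
`w_{k+1} = −f'(x_k)⁻¹ f(x_k)` and `w_k = −f'(x_{k-1})⁻¹ f(x_{k-1})` satisfy
`η_{k+1} = ‖w_{k+1}‖/‖w_k‖ ≤ C₁ ‖e_k‖/‖e_{k-1}‖`. -/
theorem stmt_11 (n : ℕ) (f : EuclideanSpace ℝ (Fin n) → EuclideanSpace ℝ (Fin n))
    (xstar : EuclideanSpace ℝ (Fin n))
    (hf : ContDiff ℝ 3 f) (hfxs : f xstar = 0)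
    (hinv : Function.Bijective (fderiv ℝ f xstar)) :
    ∃ ρ > (0 : ℝ), ∃ C₁ : ℝ, ∀ xk xk1 wk1 wk : EuclideanSpace ℝ (Fin n),
      xk ∈ Metric.ball xstar ρ → xk1 ∈ Metric.ball xstar ρ →
      xk1 ≠ xstar →
      fderiv ℝ f xk wk1 = -f xk →
      fderiv ℝ f xk1 wk = -f xk1 →
      ‖wk1‖ / ‖wk‖ ≤ C₁ * (‖xk - xstar‖ / ‖xk1 - xstar‖) := by
  classical
  by_cases hsub : Subsingleton (EuclideanSpace ℝ (Fin n))
  · exact ⟨1, one_pos, 0, fun xk xk1 wk1 wk _ _ hne _ _ =>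
      absurd (Subsingleton.elim _ _) hne⟩
  have hnt : Nontrivial (EuclideanSpace ℝ (Fin n)) :=
    not_subsingleton_iff_nontrivial.mp hsub
  set Φ := fderiv ℝ f xstar with hΦ
  have hinv' : Function.Bijective ((Φ : EuclideanSpace ℝ (Fin n) →ₗ[ℝ] EuclideanSpace ℝ (Fin n)) : EuclideanSpace ℝ (Fin n) → EuclideanSpace ℝ (Fin n)) := hinv
  let eΦ : EuclideanSpace ℝ (Fin n) ≃L[ℝ] EuclideanSpace ℝ (Fin n) :=
    (LinearEquiv.ofBijective (Φ : EuclideanSpace ℝ (Fin n) →ₗ[ℝ] EuclideanSpace ℝ (Fin n)) hinv').toContinuousLinearEquiv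
  set K₀ := ‖(eΦ.symm : EuclideanSpace ℝ (Fin n) →L[ℝ] EuclideanSpace ℝ (Fin n))‖ with hK₀
  have hcoe : ∀ v : EuclideanSpace ℝ (Fin n), (eΦ v : EuclideanSpace ℝ (Fin n)) = Φ v := fun v => rfl
  have hanti : ∀ v : EuclideanSpace ℝ (Fin n), ‖v‖ ≤ K₀ * ‖Φ v‖ := by
    intro v
    calc ‖v‖ = ‖eΦ.symm (eΦ v)‖ := by rw [eΦ.symm_apply_apply]
      _ ≤ K₀ * ‖(eΦ v : EuclideanSpace ℝ (Fin n))‖ := (eΦ.symm : EuclideanSpace ℝ (Fin n) →L[ℝ] EuclideanSpace ℝ (Fin n)).le_opNorm _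
      _ = K₀ * ‖Φ v‖ := by rw [hcoe]
  obtain ⟨v₀, hv₀⟩ := exists_ne (0 : EuclideanSpace ℝ (Fin n))
  have hK₀pos : 0 < K₀ := by
    have h := hanti v₀
    have h0 : 0 < ‖v₀‖ := norm_pos_iff.mpr hv₀
    nlinarith [norm_nonneg (Φ v₀), norm_nonneg (eΦ.symm : EuclideanSpace ℝ (Fin n) →L[ℝ] EuclideanSpace ℝ (Fin n))]
  set ε := 1 / (2 * K₀) with hε
  have hεpos : 0 < ε := by positivity
  have hKε : K₀ * ε = 1 / 2 := by
    rw [hε]; field_simp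
  have hdiff : DifferentiableAt ℝ f xstar :=
    (hf.differentiable (by norm_num : (3:WithTop ℕ∞) ≠ 0)).differentiableAt
  have hlo := hdiff.hasFDerivAt.isLittleO
  have h1 : ∀ᶠ x in nhds xstar, ‖f x - Φ (x - xstar)‖ ≤ ε * ‖x - xstar‖ := by
    filter_upwards [hlo.def hεpos] with x hx
    rw [hfxs, sub_zero] at hx
    exact hx
  have hcont : ContinuousAt (fun x => fderiv ℝ f x) xstar :=
    (hf.continuous_fderiv (by norm_num : (3:WithTop ℕ∞) ≠ 0)).continuousAt
  have h2 : ∀ᶠ x in nhds xstar, ‖fderiv ℝ f x - Φ‖ ≤ ε := by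
    have hmem := hcont (Metric.closedBall_mem_nhds Φ hεpos)
    filter_upwards [hmem] with x hx
    simpa [Metric.mem_closedBall, dist_eq_norm] using hx
  have hev := h1.and h2
  rw [Metric.eventually_nhds_iff] at hev
  obtain ⟨ρ, hρpos, hball⟩ := hev
  set A := 2 * K₀ * (‖Φ‖ + ε) with hA
  have hApos : 0 < A := by positivity
  refine ⟨ρ, hρpos, A * A, ?_⟩
  intro xk xk1 wk1 wk hxk hxk1 hne hw1 hw
  have hxk' := hball (Metric.mem_ball.mp hxk)
  have hxk1' := hball (Metric.mem_ball.mp hxk1)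
  -- lower bound on derivative applied to vectors
  have hvec : ∀ x : EuclideanSpace ℝ (Fin n), ‖fderiv ℝ f x - Φ‖ ≤ ε → ∀ v : EuclideanSpace ℝ (Fin n),
      ‖v‖ ≤ 2 * K₀ * ‖fderiv ℝ f x v‖ := by
    intro x hx v
    have ha := hanti v
    have hΦv : ‖Φ v‖ ≤ ‖fderiv ℝ f x v‖ + ε * ‖v‖ := by
      have h3 : ‖Φ v - fderiv ℝ f x v‖ ≤ ε * ‖v‖ := by
        have := (Φ - fderiv ℝ f x).le_opNorm v
        rw [ContinuousLinearMap.sub_apply] at this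
        calc ‖Φ v - fderiv ℝ f x v‖ ≤ ‖Φ - fderiv ℝ f x‖ * ‖v‖ := this
          _ ≤ ε * ‖v‖ := by
            have : ‖Φ - fderiv ℝ f x‖ = ‖fderiv ℝ f x - Φ‖ := norm_sub_rev _ _
            rw [this]
            exact mul_le_mul_of_nonneg_right hx (norm_nonneg v)
      calc ‖Φ v‖ = ‖fderiv ℝ f x v + (Φ v - fderiv ℝ f x v)‖ := by congr 1; abel
        _ ≤ ‖fderiv ℝ f x v‖ + ‖Φ v - fderiv ℝ f x v‖ := norm_add_le _ _
        _ ≤ ‖fderiv ℝ f x v‖ + ε * ‖v‖ := by linarith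
    have hchain : ‖v‖ ≤ K₀ * ‖fderiv ℝ f x v‖ + (K₀ * ε) * ‖v‖ := by
      calc ‖v‖ ≤ K₀ * ‖Φ v‖ := ha
        _ ≤ K₀ * (‖fderiv ℝ f x v‖ + ε * ‖v‖) :=
            mul_le_mul_of_nonneg_left hΦv (le_of_lt hK₀pos)
        _ = K₀ * ‖fderiv ℝ f x v‖ + (K₀ * ε) * ‖v‖ := by ring
    rw [hKε] at hchain
    linarith
  -- upper bound ‖f x‖ ≤ (‖Φ‖ + ε) ‖x - xstar‖
  have hup : ∀ x : EuclideanSpace ℝ (Fin n), ‖f x - Φ (x - xstar)‖ ≤ ε * ‖x - xstar‖ →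
      ‖f x‖ ≤ (‖Φ‖ + ε) * ‖x - xstar‖ := by
    intro x hx
    calc ‖f x‖ = ‖Φ (x - xstar) + (f x - Φ (x - xstar))‖ := by congr 1; abel
      _ ≤ ‖Φ (x - xstar)‖ + ‖f x - Φ (x - xstar)‖ := norm_add_le _ _
      _ ≤ ‖Φ‖ * ‖x - xstar‖ + ε * ‖x - xstar‖ :=
          add_le_add (Φ.le_opNorm _) hx
      _ = (‖Φ‖ + ε) * ‖x - xstar‖ := by ring
  -- lower bound ‖x - xstar‖ ≤ 2 K₀ ‖f x‖
  have hlow : ∀ x : EuclideanSpace ℝ (Fin n), ‖f x - Φ (x - xstar)‖ ≤ ε * ‖x - xstar‖ →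
      ‖x - xstar‖ ≤ 2 * K₀ * ‖f x‖ := by
    intro x hx
    have ha := hanti (x - xstar)
    have hΦe : ‖Φ (x - xstar)‖ ≤ ‖f x‖ + ε * ‖x - xstar‖ := by
      calc ‖Φ (x - xstar)‖ = ‖f x - (f x - Φ (x - xstar))‖ := by congr 1; abel
        _ ≤ ‖f x‖ + ‖f x - Φ (x - xstar)‖ := norm_sub_le _ _
        _ ≤ ‖f x‖ + ε * ‖x - xstar‖ := by linarith
    have hchain : ‖x - xstar‖ ≤ K₀ * ‖f x‖ + (K₀ * ε) * ‖x - xstar‖ := by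
      calc ‖x - xstar‖ ≤ K₀ * ‖Φ (x - xstar)‖ := ha
        _ ≤ K₀ * (‖f x‖ + ε * ‖x - xstar‖) :=
            mul_le_mul_of_nonneg_left hΦe (le_of_lt hK₀pos)
        _ = K₀ * ‖f x‖ + (K₀ * ε) * ‖x - xstar‖ := by ring
    rw [hKε] at hchain
    linarith
  -- operator norm bound
  have hop : ∀ x : EuclideanSpace ℝ (Fin n), ‖fderiv ℝ f x - Φ‖ ≤ ε → ∀ v : EuclideanSpace ℝ (Fin n),
      ‖fderiv ℝ f x v‖ ≤ (‖Φ‖ + ε) * ‖v‖ := by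
    intro x hx v
    calc ‖fderiv ℝ f x v‖ = ‖Φ v + (fderiv ℝ f x - Φ) v‖ := by
          rw [ContinuousLinearMap.sub_apply]; congr 1; abel
      _ ≤ ‖Φ v‖ + ‖(fderiv ℝ f x - Φ) v‖ := norm_add_le _ _
      _ ≤ ‖Φ‖ * ‖v‖ + ε * ‖v‖ := by
          refine add_le_add (Φ.le_opNorm _) ?_
          calc ‖(fderiv ℝ f x - Φ) v‖ ≤ ‖fderiv ℝ f x - Φ‖ * ‖v‖ :=
                (fderiv ℝ f x - Φ).le_opNorm v
            _ ≤ ε * ‖v‖ := mul_le_mul_of_nonneg_right hx (norm_nonneg v)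
      _ = (‖Φ‖ + ε) * ‖v‖ := by ring
  -- main chain
  have hw1le : ‖wk1‖ ≤ A * ‖xk - xstar‖ := by
    calc ‖wk1‖ ≤ 2 * K₀ * ‖fderiv ℝ f xk wk1‖ := hvec xk hxk'.2 wk1
      _ = 2 * K₀ * ‖f xk‖ := by rw [hw1, norm_neg]
      _ ≤ 2 * K₀ * ((‖Φ‖ + ε) * ‖xk - xstar‖) := by
          have := hup xk hxk'.1
          nlinarith
      _ = A * ‖xk - xstar‖ := by rw [hA]; ring
  have hek1le : ‖xk1 - xstar‖ ≤ A * ‖wk‖ := by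
    calc ‖xk1 - xstar‖ ≤ 2 * K₀ * ‖f xk1‖ := hlow xk1 hxk1'.1
      _ = 2 * K₀ * ‖fderiv ℝ f xk1 wk‖ := by rw [hw, norm_neg]
      _ ≤ 2 * K₀ * ((‖Φ‖ + ε) * ‖wk‖) := by
          have := hop xk1 hxk1'.2 wk
          nlinarith
      _ = A * ‖wk‖ := by rw [hA]; ring
  have hek1pos : 0 < ‖xk1 - xstar‖ := by
    rw [norm_pos_iff]
    exact sub_ne_zero.mpr hne
  have hwkpos : 0 < ‖wk‖ := by
    by_contra h
    push_neg at h
    have : ‖wk‖ = 0 := le_antisymm h (norm_nonneg wk)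
    rw [this, mul_zero] at hek1le
    linarith
  have key : ‖wk1‖ * ‖xk1 - xstar‖ ≤ A * A * ‖xk - xstar‖ * ‖wk‖ := by
    have := mul_le_mul hw1le hek1le (norm_nonneg _) (by positivity)
    nlinarith
  rw [div_le_iff₀ hwkpos]
  have hrw : A * A * (‖xk - xstar‖ / ‖xk1 - xstar‖) * ‖wk‖
      = (A * A * ‖xk - xstar‖ * ‖wk‖) / ‖xk1 - xstar‖ := by ring
  rw [hrw, le_div_iff₀ hek1pos]
  linarith
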